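/- Consider the globalized ASPIN iteration described in the context. Assume: J : ℝ^n → ℝ is continuously differentiable; the level set L = {u ∈ ℝ^n : J(u) ≤ J(u₀)} is compact; ‖∇J(u)‖ ≤ C_g for all u ∈ L for some C_g > 0; and ‖B_i‖ ≤ C_B for all i for some C_B > 0. Then the sequence of iterates satisfies liminf_{i→∞} ‖∇J(u_i)‖ = 0. -/

import Mathlib

open RealInnerProductSpace Filter

private lemma min_sq_mul {b Δ : ℝ} (hb : 0 ≤ b) : min (b ^ 2) (b * Δ) = b * min b Δ := by
  rcases le_total b Δ with h | h
  · rw [min_eq_left (by nlinarith), min_eq_left h, sq]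
  · rw [min_eq_right (by nlinarith), min_eq_right h]

private lemma dd_core {β₁ β₂ a Δ b t : ℝ} (hβ₂ : 0 < β₂) (hβ : β₂ < β₁) (ha : 0 < a)
    (hΔ : 0 < Δ) (ht0 : 0 ≤ t) (hb : a - t ≤ b) (hbn : 0 ≤ b)
    (ht : t ≤ (β₁ - β₂) * (a * min a Δ) / (β₁ * (a + min a Δ))) :
    β₁ * min (b ^ 2) (b * Δ) ≥ β₂ * min (a ^ 2) (a * Δ) := by
  set m := min a Δ with hm_def
  have hm : 0 < m := lt_min ha hΔ
  have hβ₁ : 0 < β₁ := hβ₂.trans hβ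
  have htle : β₁ * (t * (a + m)) ≤ (β₁ - β₂) * (a * m) := by
    have := (le_div_iff₀ (by positivity : (0:ℝ) < β₁ * (a + m))).1 ht
    nlinarith
  have hap : (0:ℝ) < a + m := by linarith
  have hta : t * (a + m) ≤ a * m := by nlinarith [mul_nonneg (mul_nonneg hβ₂.le ha.le) hm.le]
  have htm : t ≤ m := by nlinarith [hta, hap, hm]
  have hma : m ≤ a := min_le_left _ _
  have hmΔ : m ≤ Δ := min_le_right _ _
  have hbm : m - t ≤ min b Δ := le_min (by linarith) (by linarith)
  have key1 : (a - t) * (m - t) ≤ min (b ^ 2) (b * Δ) := by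
    rw [min_sq_mul hbn]
    exact mul_le_mul hb hbm (by linarith) hbn
  have key2 : min (a ^ 2) (a * Δ) = a * m := by rw [min_sq_mul ha.le]
  rw [ge_iff_le, key2]
  nlinarith [mul_le_mul_of_nonneg_left key1 hβ₁.le, htle, mul_nonneg hβ₁.le (sq_nonneg t)]

private lemma grad_inner {n : ℕ} (J : EuclideanSpace ℝ (Fin n) → ℝ)
    (v w : EuclideanSpace ℝ (Fin n)) : (fderiv ℝ J v) w = ⟪gradient J v, w⟫ := by
  rw [gradient]
  exact (InnerProductSpace.toDual_symm_apply).symm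

private lemma mvt_est {n : ℕ} {J : EuclideanSpace ℝ (Fin n) → ℝ} (hJ : ContDiff ℝ 1 J)
    {L : Set (EuclideanSpace ℝ (Fin n))} (hcomp : IsCompact L) {ε' : ℝ} (hε' : 0 < ε') :
    ∃ δ, 0 < δ ∧ δ ≤ 1 ∧ ∀ v ∈ L, ∀ w : EuclideanSpace ℝ (Fin n), ‖w‖ ≤ δ →
      |J (v + w) - J v - ⟪gradient J v, w⟫| ≤ ε' * ‖w‖ := by
  have hdiff : Differentiable ℝ J := hJ.differentiable one_ne_zero
  set K := Metric.cthickening 1 L with hK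
  have hKc : IsCompact K := hcomp.cthickening
  have hfc : ContinuousOn (fderiv ℝ J) K := (hJ.continuous_fderiv one_ne_zero).continuousOn
  have huc := hKc.uniformContinuousOn_of_continuous hfc
  obtain ⟨δu, hδu, hP⟩ := Metric.uniformContinuousOn_iff_le.1 huc ε' hε'
  refine ⟨min δu 1, lt_min hδu one_pos, min_le_right _ _, ?_⟩
  intro v hv w hw
  have hδ1 : min δu 1 ≤ 1 := min_le_right _ _
  have hball : Metric.closedBall v (min δu 1) ⊆ K := by
    refine subset_trans ?_ (Metric.cthickening_mono hδ1 L)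
    exact Metric.closedBall_subset_cthickening hv _
  have hvmem : v ∈ Metric.closedBall v (min δu 1) :=
    Metric.mem_closedBall_self (le_trans (norm_nonneg w) hw)
  have hwmem : v + w ∈ Metric.closedBall v (min δu 1) := by
    rw [Metric.mem_closedBall, dist_eq_norm, add_sub_cancel_left]; exact hw
  have hbound : ∀ x ∈ Metric.closedBall v (min δu 1),
      ‖fderiv ℝ J x - fderiv ℝ J v‖ ≤ ε' := by
    intro x hx
    have hxK : x ∈ K := hball hx
    have hvK : v ∈ K := hball hvmem
    have hd : dist x v ≤ δu := le_trans (Metric.mem_closedBall.1 hx) (min_le_left _ _)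
    have := hP x hxK v hvK hd
    rwa [dist_eq_norm] at this
  have := (convex_closedBall v (min δu 1)).norm_image_sub_le_of_norm_fderiv_le'
    (fun x _ => hdiff x) hbound hvmem hwmem
  rw [add_sub_cancel_left, grad_inner] at this
  rwa [Real.norm_eq_abs] at this

/-- The data of the globalized ASPIN iteration (Algorithm 2): parameters, iterates,
Hessian approximations, preconditioned gradients, corrections and the two
trust-region radii, together with the basic parameter constraints. -/
structure GAspin (n : ℕ) where
  /-- the objective function -/
  J : EuclideanSpace ℝ (Fin n) → ℝ
  γ₁ : ℝ
  γ₂ : ℝ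
  η : ℝ
  β₁ : ℝ
  β₂ : ℝ
  hγ₁ : 0 < γ₁
  hγ₁' : γ₁ < 1
  hγ₂ : 1 < γ₂
  hη : 0 < η
  hη' : η < 1
  hβ : β₂ < β₁
  hβ₂ : 0 < β₂
  /-- the iterates -/
  u : ℕ → EuclideanSpace ℝ (Fin n)
  /-- the symmetric Hessian approximations -/
  B : ℕ → EuclideanSpace ℝ (Fin n) →L[ℝ] EuclideanSpace ℝ (Fin n)
  /-- the preconditioned gradients -/
  gt : ℕ → EuclideanSpace ℝ (Fin n)
  /-- the corrections -/
  s : ℕ → EuclideanSpace ℝ (Fin n)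
  /-- the global trust-region radii -/
  ΔG : ℕ → ℝ
  /-- the local trust-region radii -/
  ΔL : ℕ → ℝ
  hΔG : ∀ i, 0 < ΔG i
  hΔL : ∀ i, 0 < ΔL i
  hΔL0 : ΔL 0 ≤ ΔG 0
  hBsymm : ∀ i, ∀ x y, ⟪B i x, y⟫ = ⟪x, B i y⟫

namespace GAspin

variable {n : ℕ} (A : GAspin n)

/-- The gradient `g_i = ∇J(u_i)` of the objective at the `i`-th iterate. -/
noncomputable def g (i : ℕ) : EuclideanSpace ℝ (Fin n) := gradient A.J (A.u i)

/-- The preconditioned quadratic model `ψ̃_i(s) = ⟨g̃_i, s⟩ + ½⟨s, B_i s⟩`. -/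
noncomputable def psi (i : ℕ) (v : EuclideanSpace ℝ (Fin n)) : ℝ :=
  ⟪A.gt i, v⟫ + (1 / 2) * ⟪v, A.B i v⟫

/-- The decrease ratio `ρ̃_i = (J(u_i) − J(u_i + s_i))/(−ψ̃_i(s_i))`. -/
noncomputable def rho (i : ℕ) : ℝ :=
  (A.J (A.u i) - A.J (A.u i + A.s i)) / (-(A.psi i (A.s i)))

/-- The extended sufficient decrease predicate `D_i`. -/
def D (i : ℕ) : Prop :=
  A.β₁ * min (‖A.gt i‖ ^ 2) (‖A.gt i‖ * A.ΔG i) ≥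
    A.β₂ * min (‖A.g i‖ ^ 2) (‖A.g i‖ * A.ΔG i)

/-- Iteration `i` is successful if `ρ̃_i ≥ η` and `D_i` holds. -/
def Succ (i : ℕ) : Prop := A.rho i ≥ A.η ∧ A.D i

end GAspin

set_option maxHeartbeats 1600000 in
/-- Theorem 6.1 of the paper: under the standard trust-region assumptions, the
globalized ASPIN iteration satisfies `liminf_{i→∞} ‖∇J(u_i)‖ = 0`. -/
theorem gaspin_liminf_gradient_zero {n : ℕ} (A : GAspin n)
    (hJ : ContDiff ℝ 1 A.J)
    (hcompact : IsCompact {v : EuclideanSpace ℝ (Fin n) | A.J v ≤ A.J (A.u 0)})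
    (C_g : ℝ) (hCg : 0 < C_g)
    (hgb : ∀ v, A.J v ≤ A.J (A.u 0) → ‖gradient A.J v‖ ≤ C_g)
    (C_B : ℝ) (hCB : 0 < C_B) (hBb : ∀ i, ‖A.B i‖ ≤ C_B)
    (ha : ∀ i, ‖A.gt i - A.g i‖ ≤ A.ΔL i)
    (hb1 : ∀ i, ‖A.s i‖ ≤ A.ΔG i)
    (hb2 : ∀ i, -(A.psi i (A.s i)) ≥ A.β₁ * min (‖A.gt i‖ ^ 2) (‖A.gt i‖ * A.ΔG i))
    (hc1 : ∀ i, A.Succ i → A.u (i + 1) = A.u i + A.s i)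
    (hc2 : ∀ i, ¬A.Succ i → A.u (i + 1) = A.u i)
    (hd1 : ∀ i, A.Succ i → A.ΔG (i + 1) = A.γ₂ * A.ΔG i)
    (hd2 : ∀ i, A.rho i ≥ A.η → ¬A.D i → A.ΔG (i + 1) = A.ΔG i)
    (hd3 : ∀ i, ¬(A.rho i ≥ A.η) → A.ΔG (i + 1) = A.γ₁ * A.ΔG i)
    (he1 : ∀ i, A.D i → A.ΔL (i + 1) = min (A.ΔG i) (A.γ₂ * A.ΔL i))
    (he2 : ∀ i, ¬A.D i → A.ΔL (i + 1) = min (A.ΔG i) (A.γ₁ * A.ΔL i)) :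
    Filter.liminf (fun i => ‖A.g i‖) Filter.atTop = 0 := by
  classical
  have hβ₁ : 0 < A.β₁ := A.hβ₂.trans A.hβ
  have hdiff : Differentiable ℝ A.J := hJ.differentiable one_ne_zero
  set L : Set (EuclideanSpace ℝ (Fin n)) := {v | A.J v ≤ A.J (A.u 0)} with hLdef
  -- nonnegativity of the model decreases
  have hmint : ∀ i, 0 ≤ min (‖A.gt i‖ ^ 2) (‖A.gt i‖ * A.ΔG i) := fun i =>
    le_min (sq_nonneg _) (mul_nonneg (norm_nonneg _) (A.hΔG i).le)
  have hming : ∀ i, 0 ≤ min (‖A.g i‖ ^ 2) (‖A.g i‖ * A.ΔG i) := fun i =>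
    le_min (sq_nonneg _) (mul_nonneg (norm_nonneg _) (A.hΔG i).le)
  have hpsi0 : ∀ i, 0 ≤ -(A.psi i (A.s i)) := fun i =>
    le_trans (mul_nonneg hβ₁.le (hmint i)) (hb2 i)
  -- decrease on successful iterations
  have hdec : ∀ i, A.Succ i →
      A.J (A.u (i + 1)) ≤ A.J (A.u i) - A.η * (A.β₂ * min (‖A.g i‖ ^ 2) (‖A.g i‖ * A.ΔG i)) := by
    intro i hS
    obtain ⟨hρ, hD⟩ := hS
    have hqpsi : A.β₂ * min (‖A.g i‖ ^ 2) (‖A.g i‖ * A.ΔG i) ≤ -(A.psi i (A.s i)) :=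
      le_trans hD (hb2 i)
    have hψpos : 0 < -(A.psi i (A.s i)) := by
      rcases lt_or_eq_of_le (hpsi0 i) with h | h
      · exact h
      · exfalso
        have : A.rho i = 0 := by
          unfold GAspin.rho; rw [← h, div_zero]
        rw [this] at hρ
        exact absurd hρ (not_le.2 A.hη)
    have hρ' : A.η * (-(A.psi i (A.s i))) ≤ A.J (A.u i) - A.J (A.u i + A.s i) := by
      have := (le_div_iff₀ hψpos).1 hρ
      linarith
    rw [hc1 i ⟨hρ, hD⟩]
    have h2 : A.η * (A.β₂ * min (‖A.g i‖ ^ 2) (‖A.g i‖ * A.ΔG i)) ≤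
        A.η * (-(A.psi i (A.s i))) := mul_le_mul_of_nonneg_left hqpsi A.hη.le
    linarith
  -- monotonicity of J along iterates
  have hmono : ∀ i, A.J (A.u (i + 1)) ≤ A.J (A.u i) := by
    intro i
    by_cases hS : A.Succ i
    · have h1 := hdec i hS
      have h2 : 0 ≤ A.η * (A.β₂ * min (‖A.g i‖ ^ 2) (‖A.g i‖ * A.ΔG i)) :=
        mul_nonneg A.hη.le (mul_nonneg A.hβ₂.le (hming i))
      linarith
    · rw [hc2 i hS]
  have hanti : Antitone fun i => A.J (A.u i) := antitone_nat_of_succ_le hmono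
  have hmem : ∀ i, A.u i ∈ L := fun i => hanti (Nat.zero_le i)
  have hLne : L.Nonempty := ⟨A.u 0, by simp [hLdef]⟩
  obtain ⟨v₀, hv₀L, hv₀min⟩ := hcompact.exists_isMinOn hLne hJ.continuous.continuousOn
  set m := A.J v₀ with hmdef
  have hlow : ∀ i, m ≤ A.J (A.u i) := fun i => hv₀min (hmem i)
  -- radii dynamics
  have hGfail : ∀ i, ¬A.Succ i → A.ΔG (i + 1) ≤ A.ΔG i := by
    intro i hS
    by_cases hρ : A.rho i ≥ A.η
    · have hD : ¬A.D i := fun hD => hS ⟨hρ, hD⟩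
      rw [hd2 i hρ hD]
    · rw [hd3 i hρ]
      nlinarith [A.hΔG i, A.hγ₁']
  have hΔLG : ∀ i, A.ΔL (i + 1) ≤ A.ΔG i := by
    intro i
    by_cases hD : A.D i
    · rw [he1 i hD]; exact min_le_left _ _
    · rw [he2 i hD]; exact min_le_left _ _
  have hgC : ∀ i, ‖A.g i‖ ≤ C_g := fun i => hgb _ (hmem i)
  -- THE KEY CLAIM: the gradient norms cannot stay bounded away from 0
  have key : ∀ ε : ℝ, 0 < ε → ∀ N : ℕ, ¬(∀ i, N ≤ i → ε ≤ ‖A.g i‖) := by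
    intro ε hε N hN
    -- constants
    set c₀ := (1 - A.η) * A.β₁ * ε / 2 with hc₀def
    have hc₀ : 0 < c₀ := by
      have h1 : 0 < 1 - A.η := by linarith [A.hη']
      have h2 := mul_pos (mul_pos h1 hβ₁) hε
      rw [hc₀def]; linarith
    obtain ⟨δ₀, hδ₀, hδ₀1, hMVT⟩ := mvt_est hJ hcompact (half_pos hc₀)
    set δ := min δ₀ (min (min (ε / 2) ((A.β₁ - A.β₂) * ε / A.β₁)) (c₀ / (2 * (1 + C_B / 2))))
      with hδdef
    have hδpos : 0 < δ := by
      refine lt_min hδ₀ (lt_min (lt_min (half_pos hε) ?_) ?_)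
      · have h1 : 0 < A.β₁ - A.β₂ := by linarith [A.hβ]
        exact div_pos (mul_pos h1 hε) hβ₁
      · have h2 : (0:ℝ) < 2 * (1 + C_B / 2) := by linarith
        exact div_pos hc₀ h2
    have hδδ₀ : δ ≤ δ₀ := min_le_left _ _
    have hδ1 : δ ≤ 1 := hδδ₀.trans hδ₀1
    have hδε : δ ≤ ε / 2 := le_trans (min_le_right _ _) (le_trans (min_le_left _ _) (min_le_left _ _))
    have hδβ : δ ≤ (A.β₁ - A.β₂) * ε / A.β₁ :=
      le_trans (min_le_right _ _) (le_trans (min_le_left _ _) (min_le_right _ _))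
    have hδc : δ ≤ c₀ / (2 * (1 + C_B / 2)) := le_trans (min_le_right _ _) (min_le_right _ _)
    -- the success criterion
    have hR : ∀ i, N ≤ i → A.ΔG i ≤ δ → A.ΔL i ≤ δ → A.Succ i := by
      intro i hiN hG hL'
      have hgε : ε ≤ ‖A.g i‖ := hN i hiN
      have hdist : ‖A.gt i - A.g i‖ ≤ δ := (ha i).trans hL'
      have hrev : ‖A.g i‖ - ‖A.gt i‖ ≤ δ := by
        have h1 := norm_sub_norm_le (A.g i) (A.gt i)
        rw [norm_sub_rev] at h1
        linarith
      have hgt_lb : ε / 2 ≤ ‖A.gt i‖ := by linarith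
      have hGgt : A.ΔG i ≤ ‖A.gt i‖ := le_trans hG (le_trans hδε hgt_lb)
      have hmin_gt : min (‖A.gt i‖ ^ 2) (‖A.gt i‖ * A.ΔG i) = ‖A.gt i‖ * A.ΔG i :=
        min_eq_right (by nlinarith [norm_nonneg (A.gt i)])
      have hD : A.D i := by
        show A.β₁ * min (‖A.gt i‖ ^ 2) (‖A.gt i‖ * A.ΔG i) ≥
          A.β₂ * min (‖A.g i‖ ^ 2) (‖A.g i‖ * A.ΔG i)
        rw [hmin_gt]
        have h3 : A.β₂ * min (‖A.g i‖ ^ 2) (‖A.g i‖ * A.ΔG i) ≤ A.β₂ * (‖A.g i‖ * A.ΔG i) :=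
          mul_le_mul_of_nonneg_left (min_le_right _ _) A.hβ₂.le
        have hβδ : A.β₁ * δ ≤ (A.β₁ - A.β₂) * ε := by
          have h5 := mul_le_mul_of_nonneg_left hδβ hβ₁.le
          rwa [mul_div_cancel₀ _ (ne_of_gt hβ₁)] at h5
        have h4 : A.β₂ * ‖A.g i‖ ≤ A.β₁ * ‖A.gt i‖ := by nlinarith [A.hβ]
        nlinarith [mul_le_mul_of_nonneg_right h4 (A.hΔG i).le]
      have hψlb : A.β₁ * (‖A.gt i‖ * A.ΔG i) ≤ -(A.psi i (A.s i)) := by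
        have := hb2 i
        rw [hmin_gt] at this
        exact this
      have hψΔ : A.β₁ * (ε / 2) * A.ΔG i ≤ -(A.psi i (A.s i)) := by
        refine le_trans ?_ hψlb
        have hmul : (A.β₁ * A.ΔG i) * (ε / 2) ≤ (A.β₁ * A.ΔG i) * ‖A.gt i‖ :=
          mul_le_mul_of_nonneg_left hgt_lb (mul_nonneg hβ₁.le (A.hΔG i).le)
        nlinarith [hmul]
      have hψpos : 0 < -(A.psi i (A.s i)) :=
        lt_of_lt_of_le (mul_pos (mul_pos hβ₁ (half_pos hε)) (A.hΔG i)) hψΔ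
      -- the model accuracy estimate
      have hsδ : ‖A.s i‖ ≤ δ := (hb1 i).trans hG
      have hmvt := hMVT (A.u i) (hmem i) (A.s i) (le_trans hsδ hδδ₀)
      have hip : |⟪A.gt i - A.g i, A.s i⟫| ≤ δ * A.ΔG i := by
        refine le_trans (abs_real_inner_le_norm _ _) ?_
        exact mul_le_mul hdist (hb1 i) (norm_nonneg _) hδpos.le
      have hBs : |⟪A.s i, A.B i (A.s i)⟫| ≤ C_B * (A.ΔG i * A.ΔG i) := by
        refine le_trans (abs_real_inner_le_norm _ _) ?_
        have h1 : ‖A.B i (A.s i)‖ ≤ C_B * ‖A.s i‖ := by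
          refine le_trans ((A.B i).le_opNorm _) ?_
          exact mul_le_mul_of_nonneg_right (hBb i) (norm_nonneg _)
        nlinarith [mul_le_mul_of_nonneg_left h1 (norm_nonneg (A.s i)),
          mul_self_le_mul_self (norm_nonneg (A.s i)) (hb1 i), hCB.le,
          norm_nonneg (A.s i), norm_nonneg ((A.B i) (A.s i))]
      have hexp : (A.J (A.u i) - A.J (A.u i + A.s i)) - (-(A.psi i (A.s i))) =
          -(A.J (A.u i + A.s i) - A.J (A.u i) - ⟪A.g i, A.s i⟫) +
            (⟪A.gt i - A.g i, A.s i⟫ + (1 / 2) * ⟪A.s i, A.B i (A.s i)⟫) := by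
        unfold GAspin.psi
        rw [inner_sub_left]
        ring
      have hgdef : A.g i = gradient A.J (A.u i) := rfl
      have hd_est : |(A.J (A.u i) - A.J (A.u i + A.s i)) - (-(A.psi i (A.s i)))| ≤
          (c₀ / 2 + δ + C_B * δ / 2) * A.ΔG i := by
        rw [hexp]
        refine le_trans (abs_add_le _ _) ?_
        rw [abs_neg]
        have h1 : |A.J (A.u i + A.s i) - A.J (A.u i) - ⟪A.g i, A.s i⟫| ≤ c₀ / 2 * A.ΔG i := by
          rw [hgdef]
          refine le_trans hmvt ?_
          exact mul_le_mul_of_nonneg_left (hb1 i) (half_pos hc₀).le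
        have h2 : |⟪A.gt i - A.g i, A.s i⟫ + (1 / 2) * ⟪A.s i, A.B i (A.s i)⟫| ≤
            δ * A.ΔG i + C_B * δ / 2 * A.ΔG i := by
          refine le_trans (abs_add_le _ _) ?_
          have h3 : |(1 / 2 : ℝ) * ⟪A.s i, A.B i (A.s i)⟫| ≤ C_B * δ / 2 * A.ΔG i := by
            rw [abs_mul]
            have : |(1 / 2 : ℝ)| = 1 / 2 := by norm_num
            rw [this]
            nlinarith [hBs, mul_le_mul_of_nonneg_left hG (mul_nonneg hCB.le (A.hΔG i).le),
              abs_nonneg (⟪A.s i, A.B i (A.s i)⟫), A.hΔG i]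
          linarith [hip]
        have := abs_nonneg (⟪A.gt i - A.g i, A.s i⟫ + (1 / 2) * ⟪A.s i, A.B i (A.s i)⟫)
        nlinarith [A.hΔG i]
      have hE : c₀ / 2 + δ + C_B * δ / 2 ≤ c₀ := by
        have h1 : δ * (2 * (1 + C_B / 2)) ≤ c₀ := by
          have := mul_le_mul_of_nonneg_right hδc (by positivity : (0:ℝ) ≤ 2 * (1 + C_B / 2))
          rwa [div_mul_cancel₀ _ (by positivity : (2 * (1 + C_B / 2) : ℝ) ≠ 0)] at this
        nlinarith
      have hρ : A.rho i ≥ A.η := by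
        show A.η ≤ A.rho i
        unfold GAspin.rho
        rw [le_div_iff₀ hψpos]
        have habs := abs_le.1 hd_est
        have hEG : (c₀ / 2 + δ + C_B * δ / 2) * A.ΔG i ≤ c₀ * A.ΔG i :=
          mul_le_mul_of_nonneg_right hE (A.hΔG i).le
        have hc₀G : c₀ * A.ΔG i ≤ (1 - A.η) * (-(A.psi i (A.s i))) := by
          have h1 : c₀ * A.ΔG i = (1 - A.η) * (A.β₁ * (ε / 2) * A.ΔG i) := by
            rw [hc₀def]; ring
          rw [h1]
          exact mul_le_mul_of_nonneg_left hψΔ (by linarith [A.hη'])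
        linarith [habs.1]
      exact ⟨hρ, hD⟩
    -- infinitely many successful iterations
    have hsucc_inf : ∀ M₀ : ℕ, ∃ i, M₀ ≤ i ∧ A.Succ i := by
      intro M₀
      by_contra hno
      push_neg at hno
      set M := max M₀ N with hMdef
      have hfail : ∀ i, M ≤ i → ¬A.Succ i := fun i hi =>
        hno i (le_trans (le_max_left _ _) hi)
      have hMN : N ≤ M := le_max_right _ _
      have huconst : ∀ i, M ≤ i → A.u i = A.u M := by
        intro i hi
        induction i, hi using Nat.le_induction with
        | base => rfl
        | succ i hi ih => rw [hc2 i (hfail i hi), ih]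
      have hGanti : ∀ i j, M ≤ i → i ≤ j → A.ΔG j ≤ A.ΔG i := by
        intro i j hi hij
        induction j, hij using Nat.le_induction with
        | base => exact le_rfl
        | succ j hij ih =>
          exact le_trans (hGfail j (hfail j (hi.trans hij))) ih
      by_cases hcase : ∀ M', M ≤ M' → ∃ i, M' ≤ i ∧ ¬(A.rho i ≥ A.η)
      · -- Case A: the global radius shrinks to 0
        have hpow : ∀ k : ℕ, ∃ i, M ≤ i ∧ A.ΔG i ≤ A.γ₁ ^ k * A.ΔG M := by
          intro k
          induction k with
          | zero => exact ⟨M, le_rfl, by simp⟩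
          | succ k ih =>
            obtain ⟨i, hi, hGi⟩ := ih
            obtain ⟨j, hj, hρj⟩ := hcase i hi
            refine ⟨j + 1, le_trans hi (hj.trans (Nat.le_succ _)), ?_⟩
            rw [hd3 j hρj]
            have h1 : A.ΔG j ≤ A.ΔG i := hGanti i j hi hj
            have h2 : A.γ₁ * A.ΔG j ≤ A.γ₁ * (A.γ₁ ^ k * A.ΔG M) :=
              mul_le_mul_of_nonneg_left (h1.trans hGi) A.hγ₁.le
            calc A.γ₁ * A.ΔG j ≤ A.γ₁ * (A.γ₁ ^ k * A.ΔG M) := h2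
              _ = A.γ₁ ^ (k + 1) * A.ΔG M := by ring
        obtain ⟨k, hk⟩ := exists_pow_lt_of_lt_one
          (div_pos hδpos (A.hΔG M)) A.hγ₁'
        obtain ⟨i₀, hi₀M, hi₀⟩ := hpow k
        have hG0 : A.ΔG i₀ ≤ δ :=
          hi₀.trans (le_of_lt ((lt_div_iff₀ (A.hΔG M)).1 hk))
        have hG1 : A.ΔG (i₀ + 1) ≤ δ := le_trans (hGanti i₀ (i₀ + 1) hi₀M (Nat.le_succ _)) hG0
        have hL1 : A.ΔL (i₀ + 1) ≤ δ := le_trans (hΔLG i₀) hG0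
        exact hfail (i₀ + 1) (hi₀M.trans (Nat.le_succ _))
          (hR (i₀ + 1) (hMN.trans (hi₀M.trans (Nat.le_succ _))) hG1 hL1)
      · -- Case B: the ratio test eventually always passes, so D must eventually fail
        push_neg at hcase
        obtain ⟨M', hM'M, hρall⟩ := hcase
        have hnD : ∀ i, M' ≤ i → ¬A.D i := fun i hi hD =>
          hfail i (hM'M.trans hi) ⟨hρall i hi, hD⟩
        have hGconst : ∀ i, M' ≤ i → A.ΔG i = A.ΔG M' := by
          intro i hi
          induction i, hi using Nat.le_induction with
          | base => rfl
          | succ i hi ih => rw [hd2 i (hρall i hi) (hnD i hi), ih]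
        have hLgeo : ∀ k : ℕ, A.ΔL (M' + k) ≤ A.γ₁ ^ k * A.ΔL M' := by
          intro k
          induction k with
          | zero => simp
          | succ k ih =>
            have h1 : A.ΔL (M' + k + 1) ≤ A.γ₁ * A.ΔL (M' + k) := by
              rw [he2 (M' + k) (hnD (M' + k) (Nat.le_add_right _ _))]
              exact min_le_right _ _
            have h2 : A.γ₁ * A.ΔL (M' + k) ≤ A.γ₁ * (A.γ₁ ^ k * A.ΔL M') :=
              mul_le_mul_of_nonneg_left ih A.hγ₁.le
            calc A.ΔL (M' + (k + 1)) = A.ΔL (M' + k + 1) := by ring_nf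
              _ ≤ A.γ₁ * (A.γ₁ ^ k * A.ΔL M') := h1.trans h2
              _ = A.γ₁ ^ (k + 1) * A.ΔL M' := by ring
        set a := ‖A.g M'‖ with hadef
        have haε : ε ≤ a := hN M' (hMN.trans hM'M)
        have hapos : 0 < a := hε.trans_le haε
        set Δs := A.ΔG M' with hΔsdef
        set mm := min a Δs with hmmdef
        have hmm : 0 < mm := lt_min hapos (A.hΔG M')
        set t₀ := (A.β₁ - A.β₂) * (a * mm) / (A.β₁ * (a + mm)) with ht₀def
        have ht₀pos : 0 < t₀ := by
          have h1 : 0 < A.β₁ - A.β₂ := by linarith [A.hβ]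
          exact div_pos (mul_pos h1 (mul_pos hapos hmm)) (mul_pos hβ₁ (by linarith))
        obtain ⟨k, hk⟩ := exists_pow_lt_of_lt_one
          (div_pos ht₀pos (A.hΔL M')) A.hγ₁'
        have hDi : A.D (M' + k) := by
          have hgi : A.g (M' + k) = A.g M' := by
            unfold GAspin.g
            rw [huconst (M' + k) (hM'M.trans (Nat.le_add_right _ _)), huconst M' hM'M]
          have hGi : A.ΔG (M' + k) = Δs := hGconst (M' + k) (Nat.le_add_right _ _)
          have ht : ‖A.gt (M' + k) - A.g (M' + k)‖ ≤ t₀ := by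
            refine le_trans (ha (M' + k)) (le_trans (hLgeo k) ?_)
            have := (lt_div_iff₀ (A.hΔL M')).1 hk
            linarith
          show A.β₁ * min (‖A.gt (M' + k)‖ ^ 2) (‖A.gt (M' + k)‖ * A.ΔG (M' + k)) ≥
            A.β₂ * min (‖A.g (M' + k)‖ ^ 2) (‖A.g (M' + k)‖ * A.ΔG (M' + k))
          rw [hgi, hGi]
          refine dd_core (t := t₀) A.hβ₂ A.hβ hapos (A.hΔG M') ht₀pos.le ?_ (norm_nonneg _) le_rfl
          have h1 := norm_sub_norm_le (A.g M') (A.gt (M' + k))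
          rw [norm_sub_rev, ← hgi] at h1
          have h2 : ‖A.g M'‖ = ‖A.g (M' + k)‖ := by rw [hgi]
          linarith [ht, h1, h2]
        exact hnD (M' + k) (Nat.le_add_right _ _) hDi
    -- only finitely many successful iterations with large radius
    have hbig : ∀ c : ℝ, 0 < c → ∃ M, ∀ i, M ≤ i → A.Succ i → A.ΔG i < c := by
      intro c hc
      by_contra hcon
      push_neg at hcon
      set r := A.η * (A.β₂ * min (ε ^ 2) (ε * c)) with hrdef
      have hrpos : 0 < r := by
        have h1 : 0 < min (ε ^ 2) (ε * c) := lt_min (pow_pos hε 2) (mul_pos hε hc)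
        exact mul_pos A.hη (mul_pos A.hβ₂ h1)
      have hstep : ∀ i, N ≤ i → A.Succ i → c ≤ A.ΔG i →
          A.J (A.u (i + 1)) ≤ A.J (A.u i) - r := by
        intro i hi hS hci
        have h0 := hdec i hS
        have h1 : ε ≤ ‖A.g i‖ := hN i hi
        have hm2 : min (ε ^ 2) (ε * c) ≤ min (‖A.g i‖ ^ 2) (‖A.g i‖ * A.ΔG i) := by
          refine le_min ?_ ?_
          · exact le_trans (min_le_left _ _) (by nlinarith)
          · exact le_trans (min_le_right _ _)
              (mul_le_mul h1 hci hc.le (norm_nonneg _))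
        have h3 : r ≤ A.η * (A.β₂ * min (‖A.g i‖ ^ 2) (‖A.g i‖ * A.ΔG i)) := by
          refine mul_le_mul_of_nonneg_left ?_ A.hη.le
          exact mul_le_mul_of_nonneg_left hm2 A.hβ₂.le
        linarith
      have hchain : ∀ k : ℕ, ∃ i, N ≤ i ∧ A.J (A.u i) ≤ A.J (A.u N) - k * r := by
        intro k
        induction k with
        | zero => exact ⟨N, le_rfl, by simp⟩
        | succ k ih =>
          obtain ⟨i, hi, hJi⟩ := ih
          obtain ⟨j, hj, hSj, hcj⟩ := hcon i
          have h1 := hstep j (hi.trans hj) hSj hcj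
          have h2 : A.J (A.u j) ≤ A.J (A.u i) := hanti hj
          refine ⟨j + 1, le_trans hi (hj.trans (Nat.le_succ _)), ?_⟩
          push_cast
          linarith
      obtain ⟨k, hk⟩ := exists_nat_gt ((A.J (A.u N) - m) / r)
      obtain ⟨i, _, hJi⟩ := hchain k
      have h1 := hlow i
      rw [div_lt_iff₀ hrpos] at hk
      linarith
    -- ΔG tends to 0, hence so does ΔL, hence everything is eventually successful
    obtain ⟨M₁, hM₁⟩ := hbig (δ / A.γ₂) (div_pos hδpos (lt_trans one_pos A.hγ₂))
    obtain ⟨i₀, hi₀, hSi₀⟩ := hsucc_inf (max M₁ N)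
    have hi₀M₁ : M₁ ≤ i₀ := le_trans (le_max_left _ _) hi₀
    have hbase : A.ΔG (i₀ + 1) < δ := by
      rw [hd1 i₀ hSi₀]
      have h1 := hM₁ i₀ hi₀M₁ hSi₀
      have h2 : 0 < A.γ₂ := lt_trans one_pos A.hγ₂
      calc A.γ₂ * A.ΔG i₀ < A.γ₂ * (δ / A.γ₂) := by
            exact mul_lt_mul_of_pos_left h1 h2
        _ = δ := by field_simp
    have hind : ∀ k : ℕ, A.ΔG (i₀ + 1 + k) < δ := by
      intro k
      induction k with
      | zero => exact hbase
      | succ k ih =>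
        have heq : i₀ + 1 + (k + 1) = (i₀ + 1 + k) + 1 := by omega
        rw [heq]
        by_cases hS : A.Succ (i₀ + 1 + k)
        · rw [hd1 _ hS]
          have h1 := hM₁ (i₀ + 1 + k) (by omega) hS
          have h2 : 0 < A.γ₂ := lt_trans one_pos A.hγ₂
          calc A.γ₂ * A.ΔG (i₀ + 1 + k) < A.γ₂ * (δ / A.γ₂) := mul_lt_mul_of_pos_left h1 h2
            _ = δ := by field_simp
        · exact lt_of_le_of_lt (hGfail _ hS) ih
    set M₂ := max (i₀ + 2) N with hM₂def
    have hGsmall : ∀ i, M₂ ≤ i → A.ΔG i < δ := by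
      intro i hi
      have h1 : i₀ + 1 ≤ i := by
        have := le_max_left (i₀ + 2) N
        omega
      obtain ⟨k, rfl⟩ := Nat.exists_eq_add_of_le h1
      exact hind k
    have hLsmall : ∀ i, M₂ ≤ i → A.ΔL i < δ := by
      intro i hi
      have h1 : i₀ + 2 ≤ i := le_trans (le_max_left _ _) hi
      obtain ⟨j, rfl⟩ : ∃ j, i = j + 1 := ⟨i - 1, by omega⟩
      have h2 : i₀ + 1 ≤ j := by omega
      obtain ⟨k, rfl⟩ := Nat.exists_eq_add_of_le h2
      exact lt_of_le_of_lt (hΔLG _) (hind k)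
    have hallS : ∀ i, M₂ ≤ i → A.Succ i := fun i hi =>
      hR i (le_trans (le_max_right _ _) hi) (hGsmall i hi).le (hLsmall i hi).le
    have hgrow : ∀ k : ℕ, A.ΔG (M₂ + k) = A.γ₂ ^ k * A.ΔG M₂ := by
      intro k
      induction k with
      | zero => simp
      | succ k ih =>
        have heq : M₂ + (k + 1) = (M₂ + k) + 1 := by omega
        rw [heq, hd1 _ (hallS _ (Nat.le_add_right _ _)), ih]
        ring
    obtain ⟨k, hk⟩ := pow_unbounded_of_one_lt (δ / A.ΔG M₂) A.hγ₂
    have h1 := hGsmall (M₂ + k) (Nat.le_add_right _ _)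
    rw [hgrow k] at h1
    rw [div_lt_iff₀ (A.hΔG M₂)] at hk
    linarith
  -- conclude
  have hbddbelow : IsBoundedUnder (· ≥ ·) atTop (fun i => ‖A.g i‖) :=
    isBoundedUnder_of ⟨0, fun i => norm_nonneg _⟩
  have hcob : IsCoboundedUnder (· ≥ ·) atTop (fun i => ‖A.g i‖) :=
    isCoboundedUnder_ge_of_eventually_le atTop (Eventually.of_forall hgC)
  refine le_antisymm ?_ (le_liminf_of_le hcob (Eventually.of_forall fun i => norm_nonneg _))
  by_contra hpos
  push_neg at hpos
  have hev := eventually_lt_of_lt_liminf (half_lt_self hpos) hbddbelow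
  obtain ⟨N, hN⟩ := eventually_atTop.1 hev
  exact key (liminf (fun i => ‖A.g i‖) atTop / 2) (half_pos hpos) N
    (fun i hi => (hN i hi).le)
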